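/- arXiv:2509.21202 — 3 statements merged into one kernel-verified Lean document; each statement's English description precedes it below -/
import Mathlib

section
/- Let a ∈ [0,1] and L ∈ ℕ. If f is L times continuously differentiable on [M₁, M₂], where M₁, M₂ ∈ ℤ with M₂ > M₁, then Σ_{m=M₁}^{M₂−1} f(m+a) = ∫_{M₁}^{M₂} f(x) dx − Σ_{m=0}^{L−1} (B_{m+1}(a)/(m+1)!)·( f^{(m)}(M₁) − f^{(m)}(M₂) ) + ((−1)^{L+1}/L!) ∫_{M₁}^{M₂} B̃_L(x−a) f^{(L)}(x) dx. -/
open scoped Real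
open Filter MeasureTheory
open Topology

noncomputable section

/-- the Bernoulli polynomial `B_n(x)` evaluated at a real `x` -/
def bern (n : ℕ) (x : ℝ) : ℝ := Polynomial.aeval x (Polynomial.bernoulli n)

/-- the periodized Bernoulli polynomial `B̃_n(x) = B_n(x − ⌊x⌋)` -/
def bernTilde (n : ℕ) (x : ℝ) : ℝ := bern n (Int.fract x)

lemma bern_continuous (n : ℕ) : Continuous (bern n) :=
  Polynomial.continuous_aeval _

lemma bern_rat (n : ℕ) (q : ℚ) : bern n (q : ℝ) = ((Polynomial.bernoulli n).eval q : ℚ) := by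
  have := Polynomial.aeval_algebraMap_apply_eq_algebraMap_eval (A := ℝ) q (Polynomial.bernoulli n)
  simpa [bern, Algebra.algebraMap_eq_smul_one] using this

lemma bern_zero_eq (x : ℝ) : bern 0 x = 1 := by simp [bern]

lemma bernTilde_zero_eq (x : ℝ) : bernTilde 0 x = 1 := bern_zero_eq _

lemma hasDerivAt_bern (n : ℕ) (c x : ℝ) :
    HasDerivAt (fun y => bern (n+1) (y - c)) (((n:ℝ)+1) * bern n (x - c)) x := by
  have h := (Polynomial.bernoulli (n+1)).hasDerivAt_aeval (R := ℚ) (x - c)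
  have h2 := h.comp x ((hasDerivAt_id x).sub_const c)
  simp only [Polynomial.derivative_bernoulli_add_one, map_mul, mul_one] at h2
  refine h2.congr_deriv ?_
  simp [bern]

lemma bernoulli_comp_one_sub (n : ℕ) :
    (Polynomial.bernoulli n).comp (1 - Polynomial.X) =
      Polynomial.C ((-1:ℚ)^n) * Polynomial.bernoulli n := by
  induction n with
  | zero => simp
  | succ n ih =>
    have hc : (Polynomial.C ((-1:ℚ)^(n+1))) = -Polynomial.C ((-1:ℚ)^n) := by
      rw [pow_succ]; simp
    have hder : Polynomial.derivative ((Polynomial.bernoulli (n+1)).comp (1 - Polynomial.X) -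
        Polynomial.C ((-1:ℚ)^(n+1)) * Polynomial.bernoulli (n+1)) = 0 := by
      rw [Polynomial.derivative_sub, Polynomial.derivative_comp_one_sub_X,
        Polynomial.derivative_C_mul, Polynomial.derivative_bernoulli_add_one,
        Polynomial.mul_comp, ih, hc]
      simp only [Polynomial.natCast_comp, Polynomial.add_comp, Polynomial.one_comp]
      ring
    have hC := Polynomial.eq_C_of_natDegree_eq_zero
      (Polynomial.natDegree_eq_zero_of_derivative_eq_zero hder)
    have h1 : ((Polynomial.bernoulli (n+1)).comp (1 - Polynomial.X) -
        Polynomial.C ((-1:ℚ)^(n+1)) * Polynomial.bernoulli (n+1)).eval 1 = 0 := by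
      simp [Polynomial.eval_comp, Polynomial.bernoulli_eval_zero, Polynomial.bernoulli_eval_one,
        bernoulli'_eq_bernoulli, ← mul_assoc, ← mul_pow]
    rw [hC] at h1
    simp only [Polynomial.eval_C] at h1
    rw [h1, map_zero] at hC
    exact sub_eq_zero.mp hC

lemma bern_one_sub (n : ℕ) (x : ℝ) : bern n (1 - x) = (-1:ℝ)^n * bern n x := by
  have h := congrArg (fun p => (Polynomial.aeval x (R := ℚ) (A := ℝ)) p) (bernoulli_comp_one_sub n)
  simpa [bern, Polynomial.aeval_comp, map_mul, map_pow] using h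

lemma bern_one_eq_bern_zero {n : ℕ} (hn : n ≠ 1) : bern n 1 = bern n 0 := by
  have h0 := bern_rat n 0
  have h1 := bern_rat n 1
  push_cast at h0 h1
  rw [h0, h1, Polynomial.bernoulli_eval_zero, Polynomial.bernoulli_eval_one,
    bernoulli_eq_bernoulli'_of_ne_one hn]

lemma bern_one_sub_bern_zero_one : bern 1 1 - bern 1 0 = 1 := by
  have h0 := bern_rat 1 0
  have h1 := bern_rat 1 1
  push_cast at h0 h1
  rw [h0, h1, Polynomial.bernoulli_eval_zero, Polynomial.bernoulli_eval_one]
  norm_num [bernoulli_one, bernoulli'_one]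

lemma fract_piece1 {a : ℝ} (ha : a ∈ Set.Icc (0:ℝ) 1) (n : ℤ) {x : ℝ}
    (hx : x ∈ Set.Ioo (n:ℝ) ((n:ℝ) + a)) : Int.fract (x - a) = x - a - n + 1 := by
  have hfl : ⌊x - a⌋ = n - 1 := by
    rw [Int.floor_eq_iff]
    constructor
    · push_cast
      nlinarith [hx.1, ha.2]
    · push_cast
      nlinarith [hx.2]
  rw [Int.fract, hfl]
  push_cast
  ring

lemma fract_piece2 {a : ℝ} (ha : a ∈ Set.Icc (0:ℝ) 1) (n : ℤ) {x : ℝ}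
    (hx : x ∈ Set.Ioo ((n:ℝ) + a) ((n:ℝ) + 1)) : Int.fract (x - a) = x - a - n := by
  have hfl : ⌊x - a⌋ = n := by
    rw [Int.floor_eq_iff]
    constructor
    · nlinarith [hx.1]
    · push_cast
      nlinarith [hx.2, ha.1]
  rw [Int.fract, hfl]

lemma bernTilde_bounded (ℓ : ℕ) : ∃ C : ℝ, ∀ y : ℝ, ‖bernTilde ℓ y‖ ≤ C := by
  obtain ⟨C, hC⟩ := (isCompact_Icc (a := (0:ℝ)) (b := 1)).exists_bound_of_continuousOn
    (bern_continuous ℓ).continuousOn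
  exact ⟨C, fun y => hC _ ⟨(Int.fract_nonneg _), (Int.fract_lt_one _).le⟩⟩

lemma bernTilde_measurable (ℓ : ℕ) (a : ℝ) :
    Measurable (fun x : ℝ => bernTilde ℓ (x - a)) :=
  (bern_continuous ℓ).measurable.comp ((measurable_id.sub_const a).fract)

lemma bernTilde_mul_intervalIntegrable (ℓ : ℕ) (a : ℝ) {c d : ℝ} (hcd : c ≤ d) {h : ℝ → ℝ}
    (hh : ContinuousOn h (Set.Icc c d)) :
    IntervalIntegrable (fun x => bernTilde ℓ (x - a) * h x) MeasureTheory.volume c d := by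
  rw [intervalIntegrable_iff_integrableOn_Ioc_of_le hcd]
  have hint : MeasureTheory.IntegrableOn h (Set.Ioc c d) MeasureTheory.volume :=
    (hh.integrableOn_Icc).mono_set Set.Ioc_subset_Icc_self
  exact MeasureTheory.Integrable.bdd_mul hint
    ((bernTilde_measurable ℓ a).aestronglyMeasurable)
    (c := (bernTilde_bounded ℓ).choose)
    (Filter.Eventually.of_forall fun x => (bernTilde_bounded ℓ).choose_spec (x - a))

lemma pieceFTC (ℓ : ℕ) (c : ℝ) {p q : ℝ} (hpq : p ≤ q) {g g' : ℝ → ℝ}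
    (hg : ContinuousOn g (Set.Icc p q)) (hg' : ContinuousOn g' (Set.Icc p q))
    (hd : ∀ x ∈ Set.Ioo p q, HasDerivAt g (g' x) x) :
    ∫ x in p..q, (((ℓ:ℝ)+1) * (bern ℓ (x - c) * g x) + bern (ℓ+1) (x - c) * g' x)
      = bern (ℓ+1) (q - c) * g q - bern (ℓ+1) (p - c) * g p := by
  have hcont : ContinuousOn (fun x => bern (ℓ+1) (x - c) * g x) (Set.Icc p q) :=
    (((bern_continuous (ℓ+1)).comp (continuous_id.sub continuous_const)).continuousOn).mul hg
  have hderiv : ∀ x ∈ Set.Ioo p q,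
      HasDerivWithinAt (fun x => bern (ℓ+1) (x - c) * g x)
        (((ℓ:ℝ)+1) * (bern ℓ (x - c) * g x) + bern (ℓ+1) (x - c) * g' x) (Set.Ioi x) x := by
    intro x hx
    have := (hasDerivAt_bern ℓ c x).mul (hd x hx)
    have h2 : ((ℓ:ℝ)+1) * bern ℓ (x - c) * g x + bern (ℓ+1) (x - c) * g' x
        = ((ℓ:ℝ)+1) * (bern ℓ (x - c) * g x) + bern (ℓ+1) (x - c) * g' x := by ring
    rw [h2] at this
    exact this.hasDerivWithinAt
  have hint : IntervalIntegrable
      (fun x => ((ℓ:ℝ)+1) * (bern ℓ (x - c) * g x) + bern (ℓ+1) (x - c) * g' x)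
      MeasureTheory.volume p q := by
    apply ContinuousOn.intervalIntegrable
    rw [Set.uIcc_of_le hpq]
    exact (continuousOn_const.mul
      ((((bern_continuous ℓ).comp (continuous_id.sub continuous_const)).continuousOn).mul hg)).add
      ((((bern_continuous (ℓ+1)).comp (continuous_id.sub continuous_const)).continuousOn).mul hg')
  exact intervalIntegral.integral_eq_sub_of_hasDeriv_right_of_le hpq hcont hderiv hint

lemma ae_ne_real (c : ℝ) : ∀ᵐ x : ℝ, x ≠ c := by
  rw [MeasureTheory.ae_iff]
  simp only [not_not, Set.setOf_eq_eq_singleton]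
  exact MeasureTheory.measure_singleton c

lemma unitInterval_key {a : ℝ} (ha : a ∈ Set.Icc (0:ℝ) 1) (ℓ : ℕ) (n : ℤ) {g g' : ℝ → ℝ}
    (hg : ContinuousOn g (Set.Icc (n:ℝ) ((n:ℝ)+1)))
    (hg' : ContinuousOn g' (Set.Icc (n:ℝ) ((n:ℝ)+1)))
    (hd : ∀ x ∈ Set.Ioo (n:ℝ) ((n:ℝ)+1), HasDerivAt g (g' x) x) :
    ∫ x in (n:ℝ)..((n:ℝ)+1),
        (((ℓ:ℝ)+1) * (bernTilde ℓ (x-a) * g x) + bernTilde (ℓ+1) (x-a) * g' x)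
      = (bern (ℓ+1) 1 - bern (ℓ+1) 0) * g ((n:ℝ)+a)
        + bern (ℓ+1) (1-a) * (g ((n:ℝ)+1) - g (n:ℝ)) := by
  obtain ⟨ha0, ha1⟩ := ha
  have hsub1 : Set.Icc (n:ℝ) ((n:ℝ)+a) ⊆ Set.Icc (n:ℝ) ((n:ℝ)+1) :=
    Set.Icc_subset_Icc le_rfl (by linarith)
  have hsub2 : Set.Icc ((n:ℝ)+a) ((n:ℝ)+1) ⊆ Set.Icc (n:ℝ) ((n:ℝ)+1) :=
    Set.Icc_subset_Icc (by linarith) le_rfl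
  -- piece 1
  have hcongr1 : ∀ᵐ x : ℝ, x ∈ Set.uIoc (n:ℝ) ((n:ℝ)+a) →
      (((ℓ:ℝ)+1) * (bernTilde ℓ (x-a) * g x) + bernTilde (ℓ+1) (x-a) * g' x)
      = (((ℓ:ℝ)+1) * (bern ℓ (x - (a+(n:ℝ)-1)) * g x) + bern (ℓ+1) (x - (a+(n:ℝ)-1)) * g' x) := by
    filter_upwards [ae_ne_real ((n:ℝ)+a)] with x hxne hx
    rw [Set.uIoc_of_le (by linarith)] at hx
    have hxo : x ∈ Set.Ioo (n:ℝ) ((n:ℝ)+a) := ⟨hx.1, lt_of_le_of_ne hx.2 hxne⟩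
    have hf := fract_piece1 ⟨ha0, ha1⟩ n hxo
    have harg : x - a - (n:ℝ) + 1 = x - (a+(n:ℝ)-1) := by ring
    simp only [bernTilde, hf, harg]
  have h1 : (∫ x in (n:ℝ)..((n:ℝ)+a),
        (((ℓ:ℝ)+1) * (bernTilde ℓ (x-a) * g x) + bernTilde (ℓ+1) (x-a) * g' x))
      = bern (ℓ+1) 1 * g ((n:ℝ)+a) - bern (ℓ+1) (1-a) * g (n:ℝ) := by
    rw [intervalIntegral.integral_congr_ae hcongr1]
    have := pieceFTC ℓ (a+(n:ℝ)-1) (p := (n:ℝ)) (q := (n:ℝ)+a) (by linarith)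
      (hg.mono hsub1) (hg'.mono hsub1)
      (fun x hx => hd x ⟨hx.1, by have := hx.2; linarith⟩)
    have e1 : (n:ℝ)+a - (a+(n:ℝ)-1) = 1 := by ring
    have e2 : (n:ℝ) - (a+(n:ℝ)-1) = 1-a := by ring
    rwa [e1, e2] at this
  -- piece 2
  have hcongr2 : ∀ᵐ x : ℝ, x ∈ Set.uIoc ((n:ℝ)+a) ((n:ℝ)+1) →
      (((ℓ:ℝ)+1) * (bernTilde ℓ (x-a) * g x) + bernTilde (ℓ+1) (x-a) * g' x)
      = (((ℓ:ℝ)+1) * (bern ℓ (x - (a+(n:ℝ))) * g x) + bern (ℓ+1) (x - (a+(n:ℝ))) * g' x) := by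
    filter_upwards [ae_ne_real ((n:ℝ)+1)] with x hxne hx
    rw [Set.uIoc_of_le (by linarith)] at hx
    have hxo : x ∈ Set.Ioo ((n:ℝ)+a) ((n:ℝ)+1) := ⟨hx.1, lt_of_le_of_ne hx.2 hxne⟩
    have hf := fract_piece2 ⟨ha0, ha1⟩ n hxo
    have harg : x - a - (n:ℝ) = x - (a+(n:ℝ)) := by ring
    simp only [bernTilde, hf, harg]
  have h2 : (∫ x in ((n:ℝ)+a)..((n:ℝ)+1),
        (((ℓ:ℝ)+1) * (bernTilde ℓ (x-a) * g x) + bernTilde (ℓ+1) (x-a) * g' x))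
      = bern (ℓ+1) (1-a) * g ((n:ℝ)+1) - bern (ℓ+1) 0 * g ((n:ℝ)+a) := by
    rw [intervalIntegral.integral_congr_ae hcongr2]
    have := pieceFTC ℓ (a+(n:ℝ)) (p := (n:ℝ)+a) (q := (n:ℝ)+1) (by linarith)
      (hg.mono hsub2) (hg'.mono hsub2)
      (fun x hx => hd x ⟨by have := hx.1; linarith, hx.2⟩)
    have e1 : (n:ℝ)+1 - (a+(n:ℝ)) = 1-a := by ring
    have e2 : (n:ℝ)+a - (a+(n:ℝ)) = 0 := by ring
    rwa [e1, e2] at this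
  -- integrability of the bernTilde integrand on each piece
  have hI : ∀ (p q : ℝ), p ≤ q → Set.Icc p q ⊆ Set.Icc (n:ℝ) ((n:ℝ)+1) →
      IntervalIntegrable
        (fun x => ((ℓ:ℝ)+1) * (bernTilde ℓ (x-a) * g x) + bernTilde (ℓ+1) (x-a) * g' x)
        MeasureTheory.volume p q := by
    intro p q hpq hsub
    exact ((bernTilde_mul_intervalIntegrable ℓ a hpq (hg.mono hsub)).const_mul _).add
      (bernTilde_mul_intervalIntegrable (ℓ+1) a hpq (hg'.mono hsub))
  have hadd := intervalIntegral.integral_add_adjacent_intervals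
    (hI (n:ℝ) ((n:ℝ)+a) (by linarith) hsub1)
    (hI ((n:ℝ)+a) ((n:ℝ)+1) (by linarith) hsub2)
  rw [← hadd, h1, h2]
  ring

lemma sum_Ico_int {M₁ M₂ : ℤ} (h : ℤ → ℝ) :
    ∑ m ∈ Finset.Ico M₁ M₂, h m = ∑ k ∈ Finset.range (M₂ - M₁).toNat, h (M₁ + k) := by
  rw [show Finset.Ico M₁ M₂
      = (Finset.range (M₂ - M₁).toNat).map ⟨fun k : ℕ => M₁ + (k:ℤ), fun a b hab => by
        simp only [add_right_inj, Int.natCast_inj] at hab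
        exact hab⟩ by
    ext x
    simp only [Finset.mem_map, Finset.mem_range, Finset.mem_Ico, Function.Embedding.coeFn_mk]
    change (M₁ ≤ x ∧ x < M₂) ↔ ∃ a < (M₂ - M₁).toNat, M₁ + (a:ℤ) = x
    constructor
    · intro hx
      exact ⟨(x - M₁).toNat, by omega, by omega⟩
    · rintro ⟨k, hk, rfl⟩
      omega]
  rw [Finset.sum_map]
  rfl

lemma global_key {a : ℝ} (ha : a ∈ Set.Icc (0:ℝ) 1) (ℓ : ℕ) {M₁ M₂ : ℤ} (hM : M₁ < M₂)
    {g g' : ℝ → ℝ}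
    (hg : ContinuousOn g (Set.Icc (M₁:ℝ) (M₂:ℝ)))
    (hg' : ContinuousOn g' (Set.Icc (M₁:ℝ) (M₂:ℝ)))
    (hd : ∀ x ∈ Set.Ioo (M₁:ℝ) (M₂:ℝ), HasDerivAt g (g' x) x) :
    ∫ x in (M₁:ℝ)..(M₂:ℝ),
        (((ℓ:ℝ)+1) * (bernTilde ℓ (x-a) * g x) + bernTilde (ℓ+1) (x-a) * g' x)
      = (bern (ℓ+1) 1 - bern (ℓ+1) 0) * (∑ m ∈ Finset.Ico M₁ M₂, g ((m:ℝ)+a))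
        + bern (ℓ+1) (1-a) * (g (M₂:ℝ) - g (M₁:ℝ)) := by
  set N := (M₂ - M₁).toNat with hN
  have hNcast : ((N:ℤ)) = M₂ - M₁ := Int.toNat_of_nonneg (by omega)
  have hMN : (M₁:ℝ) + (N:ℝ) = (M₂:ℝ) := by
    have : ((M₁ + N : ℤ) : ℝ) = ((M₂:ℤ) : ℝ) := by rw [show M₁ + (N:ℤ) = M₂ by omega]
    push_cast at this
    linarith
  have hsubk : ∀ k : ℕ, k < N → Set.Icc ((M₁:ℝ)+k) ((M₁:ℝ)+k+1) ⊆ Set.Icc (M₁:ℝ) (M₂:ℝ) := by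
    intro k hk
    apply Set.Icc_subset_Icc
    · have : (0:ℝ) ≤ (k:ℝ) := Nat.cast_nonneg k
      linarith
    · have : (k:ℝ) + 1 ≤ N := by exact_mod_cast hk
      linarith
  have hint : ∀ k : ℕ, k < N →
      IntervalIntegrable
        (fun x => ((ℓ:ℝ)+1) * (bernTilde ℓ (x-a) * g x) + bernTilde (ℓ+1) (x-a) * g' x)
        MeasureTheory.volume ((M₁:ℝ)+k) ((M₁:ℝ)+((k+1:ℕ):ℝ)) := by
    intro k hk
    rw [show (M₁:ℝ)+((k+1:ℕ):ℝ) = (M₁:ℝ)+k+1 by push_cast; ring]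
    exact ((bernTilde_mul_intervalIntegrable ℓ a (by linarith) ((hg.mono (hsubk k hk)))).const_mul
      _).add (bernTilde_mul_intervalIntegrable (ℓ+1) a (by linarith) (hg'.mono (hsubk k hk)))
  have hsplit := intervalIntegral.sum_integral_adjacent_intervals
    (a := fun k : ℕ => (M₁:ℝ) + k) (n := N) hint
  simp only [Nat.cast_zero, add_zero] at hsplit
  rw [hMN] at hsplit
  rw [← hsplit]
  have hterm : ∀ k ∈ Finset.range N,
      (∫ x in ((M₁:ℝ)+k)..((M₁:ℝ)+((k+1:ℕ):ℝ)),
        (((ℓ:ℝ)+1) * (bernTilde ℓ (x-a) * g x) + bernTilde (ℓ+1) (x-a) * g' x))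
      = (bern (ℓ+1) 1 - bern (ℓ+1) 0) * g ((M₁:ℝ)+k+a)
        + bern (ℓ+1) (1-a) * (g ((M₁:ℝ)+k+1) - g ((M₁:ℝ)+k)) := by
    intro k hk
    rw [Finset.mem_range] at hk
    have hnk : ((M₁ + (k:ℤ) : ℤ) : ℝ) = (M₁:ℝ) + k := by push_cast; ring
    rw [show (M₁:ℝ)+((k+1:ℕ):ℝ) = (M₁:ℝ)+k+1 by push_cast; ring]
    have := unitInterval_key ha ℓ (M₁ + k)
      (g := g) (g' := g')
      (by rw [hnk]; exact hg.mono (hsubk k hk))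
      (by rw [hnk]; exact hg'.mono (hsubk k hk))
      (by
        rw [hnk]
        intro x hx
        apply hd
        have hs := hsubk k hk
        constructor
        · linarith [hx.1]
        · have : (k:ℝ) + 1 ≤ N := by exact_mod_cast hk
          linarith [hx.2])
    rw [hnk] at this
    exact this
  rw [Finset.sum_congr rfl hterm, Finset.sum_add_distrib, ← Finset.mul_sum, ← Finset.mul_sum]
  have htel : ∑ i ∈ Finset.range N, (g ((M₁:ℝ)+i+1) - g ((M₁:ℝ)+i)) = g (M₂:ℝ) - g (M₁:ℝ) := by
    have h := Finset.sum_range_sub (f := fun k : ℕ => g ((M₁:ℝ)+k)) N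
    simp only [Nat.cast_zero, add_zero, hMN] at h
    rw [← h]
    apply Finset.sum_congr rfl
    intro i _
    push_cast
    ring_nf
  have hsum : ∑ i ∈ Finset.range N, g ((M₁:ℝ)+i+a) = ∑ m ∈ Finset.Ico M₁ M₂, g ((m:ℝ)+a) := by
    rw [sum_Ico_int (fun m => g ((m:ℝ)+a))]
    apply Finset.sum_congr rfl
    intro k _
    push_cast
    ring_nf
  rw [htel, hsum]

lemma hasDerivAt_iter {M₁ M₂ : ℝ} (hM : M₁ < M₂) {f : ℝ → ℝ} {n m : ℕ}
    (hf : ContDiffOn ℝ n f (Set.Icc M₁ M₂)) (hmn : m < n) {x : ℝ} (hx : x ∈ Set.Ioo M₁ M₂) :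
    HasDerivAt (iteratedDerivWithin m f (Set.Icc M₁ M₂))
      (iteratedDerivWithin (m+1) f (Set.Icc M₁ M₂) x) x := by
  have hUD : UniqueDiffOn ℝ (Set.Icc M₁ M₂) := uniqueDiffOn_Icc hM
  have hx' : x ∈ Set.Icc M₁ M₂ := Set.mem_Icc_of_Ioo hx
  have hdiff := hf.differentiableOn_iteratedDerivWithin (m := m) (by exact_mod_cast hmn) hUD
  have hnb : Set.Icc M₁ M₂ ∈ 𝓝 x := Icc_mem_nhds hx.1 hx.2
  have h1 := ((hdiff x hx').hasDerivWithinAt).hasDerivAt hnb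
  rw [iteratedDerivWithin_succ]
  exact h1

theorem stmt6' (a : ℝ) (ha : a ∈ Set.Icc (0:ℝ) 1) (L : ℕ) (hL : 1 ≤ L)
    (M₁ M₂ : ℤ) (hM : M₁ < M₂) (f : ℝ → ℝ)
    (hf : ContDiffOn ℝ L f (Set.Icc (M₁:ℝ) (M₂:ℝ))) :
    ∑ m ∈ Finset.Ico M₁ M₂, f ((m:ℝ) + a)
      = (∫ x in (M₁:ℝ)..(M₂:ℝ), f x)
        - ∑ m ∈ Finset.range L,
            bern (m+1) a / (Nat.factorial (m+1)) *
              (iteratedDerivWithin m f (Set.Icc (M₁:ℝ) (M₂:ℝ)) (M₁:ℝ)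
               - iteratedDerivWithin m f (Set.Icc (M₁:ℝ) (M₂:ℝ)) (M₂:ℝ))
        + (-1:ℝ)^(L+1) / (Nat.factorial L) *
            ∫ x in (M₁:ℝ)..(M₂:ℝ),
              bernTilde L (x - a) * iteratedDerivWithin L f (Set.Icc (M₁:ℝ) (M₂:ℝ)) x := by
  have hMR : (M₁:ℝ) < (M₂:ℝ) := by exact_mod_cast hM
  have hUD : UniqueDiffOn ℝ (Set.Icc (M₁:ℝ) (M₂:ℝ)) := uniqueDiffOn_Icc hMR
  revert hf
  induction L, hL using Nat.le_induction with
  | base =>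
    intro hf
    set s := Set.Icc (M₁:ℝ) (M₂:ℝ)
    have hgc : ContinuousOn f s := hf.continuousOn
    have hg'c : ContinuousOn (iteratedDerivWithin 1 f s) s :=
      hf.continuousOn_iteratedDerivWithin (by exact_mod_cast le_refl 1) hUD
    have hd : ∀ x ∈ Set.Ioo (M₁:ℝ) (M₂:ℝ), HasDerivAt f (iteratedDerivWithin 1 f s x) x := by
      intro x hx
      have := hasDerivAt_iter hMR hf (Nat.zero_lt_one) hx
      rwa [iteratedDerivWithin_zero] at this
    have key := global_key ha 0 hM hgc hg'c hd
    simp only [Nat.cast_zero, zero_add, bernTilde_zero_eq, one_mul,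
      bern_one_sub_bern_zero_one] at key
    have hif : IntervalIntegrable f MeasureTheory.volume (M₁:ℝ) (M₂:ℝ) :=
      ContinuousOn.intervalIntegrable (by rw [Set.uIcc_of_le hMR.le]; exact hgc)
    have hib := bernTilde_mul_intervalIntegrable 1 a hMR.le hg'c
    rw [intervalIntegral.integral_add hif hib] at key
    have hrefl : bern 1 (1-a) = -bern 1 a := by
      have := bern_one_sub 1 a
      simpa using this
    rw [hrefl] at key
    simp only [Finset.sum_range_one, iteratedDerivWithin_zero, zero_add, Nat.factorial_one,
      Nat.cast_one, pow_succ, pow_one, neg_neg, neg_mul, one_mul, div_one]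
    norm_num
    simp only [iteratedDerivWithin_one] at key
    linarith [key]
  | succ L hL ih =>
    intro hf
    set s := Set.Icc (M₁:ℝ) (M₂:ℝ)
    have hf1 : ContDiffOn ℝ L f s := hf.of_le (by exact_mod_cast Nat.le_succ L)
    have IH := ih hf1
    have hgc : ContinuousOn (iteratedDerivWithin L f s) s :=
      hf.continuousOn_iteratedDerivWithin (by exact_mod_cast Nat.le_succ L) hUD
    have hg'c : ContinuousOn (iteratedDerivWithin (L+1) f s) s :=
      hf.continuousOn_iteratedDerivWithin (by exact_mod_cast le_refl (L+1)) hUD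
    have hd : ∀ x ∈ Set.Ioo (M₁:ℝ) (M₂:ℝ),
        HasDerivAt (iteratedDerivWithin L f s) (iteratedDerivWithin (L+1) f s x) x :=
      fun x hx => hasDerivAt_iter hMR hf (Nat.lt_succ_self L) hx
    have key := global_key ha L hM hgc hg'c hd
    have h0 : bern (L+1) 1 = bern (L+1) 0 := bern_one_eq_bern_zero (by omega)
    rw [h0, sub_self, zero_mul, zero_add] at key
    have hiu := bernTilde_mul_intervalIntegrable L a hMR.le hgc
    have hiv := bernTilde_mul_intervalIntegrable (L+1) a hMR.le hg'c
    rw [intervalIntegral.integral_add (hiu.const_mul _) hiv,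
      intervalIntegral.integral_const_mul] at key
    have hrefl : bern (L+1) a = (-1:ℝ)^(L+1) * bern (L+1) (1-a) := by
      have := bern_one_sub (L+1) (1-a)
      rwa [show (1:ℝ)-(1-a) = a by ring] at this
    have hfact : ((Nat.factorial (L+1) : ℕ) : ℝ) = ((L:ℝ)+1) * (Nat.factorial L : ℕ) := by
      rw [Nat.factorial_succ]
      push_cast
      ring
    rw [Finset.sum_range_succ, IH, hrefl, hfact, pow_succ (-1:ℝ) (L+1)]
    have hLfac : (0:ℝ) < (Nat.factorial L : ℕ) := by exact_mod_cast Nat.factorial_pos L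
    have hL1 : ((L:ℝ)+1) ≠ 0 := by positivity
    field_simp
    linear_combination ((-1:ℝ)^(L+1)) * key

/-- Shifted Euler–Maclaurin formula. -/
theorem stmt6 (a : ℝ) (ha : a ∈ Set.Icc (0:ℝ) 1) (L : ℕ) (hL : 1 ≤ L)
    (M₁ M₂ : ℤ) (hM : M₁ < M₂) (f : ℝ → ℝ)
    (hf : ContDiffOn ℝ L f (Set.Icc (M₁:ℝ) (M₂:ℝ))) :
    ∑ m ∈ Finset.Ico M₁ M₂, f ((m:ℝ) + a)
      = (∫ x in (M₁:ℝ)..(M₂:ℝ), f x)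
        - ∑ m ∈ Finset.range L,
            bern (m+1) a / (Nat.factorial (m+1)) *
              (iteratedDerivWithin m f (Set.Icc (M₁:ℝ) (M₂:ℝ)) (M₁:ℝ)
               - iteratedDerivWithin m f (Set.Icc (M₁:ℝ) (M₂:ℝ)) (M₂:ℝ))
        + (-1:ℝ)^(L+1) / (Nat.factorial L) *
            ∫ x in (M₁:ℝ)..(M₂:ℝ),
              bernTilde L (x - a) * iteratedDerivWithin L f (Set.Icc (M₁:ℝ) (M₂:ℝ)) x :=
  stmt6' a ha L hL M₁ M₂ hM f hf
end
end

section
/- Let R ∈ ℕ. There exist a constant C depending only on R and an absolute constant C' such that for all k ∈ ℕ, all r ∈ {1,…,R}, and all h ∈ ℤ with gcd(h,k) = 1: |A_{R,r,h,k}| ≤ C (k² log(k) + δ_{k=1}) and |B_{R,r,h,k}| ≤ C' k². -/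
open scoped Real
open Filter MeasureTheory

noncomputable section

/-- the sawtooth function `((x))` -/
def saw (x : ℝ) : ℝ := if Int.fract x = 0 then 0 else Int.fract x - 1/2

/-- the digamma function `ψ = Γ'/Γ` -/
def digamma (x : ℝ) : ℝ := deriv Real.Gamma x / Real.Gamma x

/-- cotangent -/
def rcot (x : ℝ) : ℝ := Real.cos x / Real.sin x

/-- the constant `A_{R,r,h,k}` -/
def Acst (R r : ℕ) (h : ℤ) (k : ℕ) : ℂ :=
  -((k : ℂ) / (2*π*R)) * ∑ ℓ ∈ Finset.range k,
    (π * Complex.I * (saw (((h:ℝ)*((R:ℝ)*ℓ+r))/k) : ℝ)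
     + (if ¬ (k ∣ (R*ℓ+r)) then
          (((1:ℝ)/2) * Real.log (4 * Real.sin (π*((h:ℝ)*((R:ℝ)*ℓ+r))/k)^2) : ℝ)
        else 0)
     + (if k ∣ (R*ℓ+r) then
          ((Real.log (2*π*R/k) + digamma (((R:ℝ)*ℓ+r)/((R:ℝ)*k))) : ℝ)
        else 0))

/-- the constant `B_{R,r,h,k}` -/
def Bcst (R r : ℕ) (h : ℤ) (k : ℕ) : ℂ :=
  (1/2) * ∑ ℓ ∈ Finset.range k,
    ((((R:ℝ)*ℓ+r)/((R:ℝ)*k) - 1/2 : ℝ) : ℂ) *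
    (1 - Complex.I * (if ¬ (k ∣ (R*ℓ+r)) then ((rcot (π*((h:ℝ)*((R:ℝ)*ℓ+r))/k) : ℝ) : ℂ) else 0))

lemma sin_half_ge {k d : ℕ} (hk : 0 < k) (h1 : 0 < d) (h2 : 2*d ≤ k) :
    2/(k:ℝ) ≤ Real.sin (π * d / k) := by
  have hkR : (0:ℝ) < k := by exact_mod_cast hk
  have hdR : (1:ℝ) ≤ d := by exact_mod_cast h1
  have h2R : 2*(d:ℝ) ≤ k := by exact_mod_cast h2
  have h0 : (0:ℝ) ≤ π * d / k := by positivity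
  have h1' : π * d / k ≤ π / 2 := by
    rw [div_le_div_iff₀ hkR two_pos]
    nlinarith [Real.pi_pos]
  refine le_trans ?_ (Real.mul_le_sin h0 h1')
  have he : 2/π * (π * (d:ℝ) / k) = 2*d/k := by
    field_simp
  rw [he, div_le_div_iff₀ hkR hkR]
  nlinarith

lemma sin_frac_ge {k d : ℕ} (hk : 0 < k) (h1 : 0 < d) (h2 : d < k) :
    2/(k:ℝ) ≤ Real.sin (π * d / k) := by
  rcases le_or_gt (2*d) k with h | h
  · exact sin_half_ge hk h1 h
  · have h1' : 0 < k - d := by omega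
    have h2' : 2*(k-d) ≤ k := by omega
    have hs := sin_half_ge hk h1' h2'
    have hkR : (k:ℝ) ≠ 0 := by positivity
    have hc : ((k-d : ℕ):ℝ) = (k:ℝ) - d := by
      push_cast [Nat.cast_sub h2.le]; ring
    rw [hc, show π * ((k:ℝ) - d) / k = π - π * d / k by field_simp,
      Real.sin_pi_sub] at hs
    exact hs

lemma abs_sin_ge {k : ℕ} (hk : 0 < k) {a : ℤ} (ha : ¬ ((k:ℤ) ∣ a)) :
    2/(k:ℝ) ≤ |Real.sin (π * a / k)| := by
  have hkZ : (0:ℤ) < k := by exact_mod_cast hk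
  set d : ℤ := a % k with hd
  set q : ℤ := a / k with hq
  have hd0 : 0 ≤ d := Int.emod_nonneg a (by omega)
  have hdk : d < k := Int.emod_lt_of_pos a hkZ
  have hdne : d ≠ 0 := fun h => ha (Int.dvd_of_emod_eq_zero h)
  have hadd : a = k * q + d := (Int.mul_ediv_add_emod a k).symm
  have hkR : (k:ℝ) ≠ 0 := by positivity
  have hsplit : (π * a / k) = π * d / k + (q:ℝ) * π := by
    have : (a:ℝ) = (k:ℝ) * q + d := by exact_mod_cast congrArg (Int.cast : ℤ → ℝ) hadd
    rw [this]; field_simp; ring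
  have habs1 : |((-1:ℝ))^q| = 1 := by
    rcases Int.even_or_odd q with h | h
    · rw [h.neg_one_zpow]; simp
    · rw [Odd.neg_one_zpow h]; simp
  rw [hsplit, Real.sin_add_int_mul_pi, abs_mul, habs1, one_mul]
  have hlt : d.toNat < k := by omega
  have h1 : 0 < d.toNat := by omega
  have := sin_frac_ge hk h1 hlt
  rw [show ((d.toNat : ℕ):ℝ) = (d:ℝ) by exact_mod_cast congrArg (Int.cast : ℤ → ℝ) (Int.toNat_of_nonneg hd0)] at this
  exact this.trans (le_abs_self _)

lemma not_dvd_mul {k : ℕ} (h : ℤ) (hco : Int.gcd h k = 1) {m : ℕ} (hm : ¬ (k ∣ m)) :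
    ¬ ((k:ℤ) ∣ h * m) := by
  intro hdvd
  apply hm
  have : (k:ℤ) ∣ (m:ℤ) := by
    have hco' : IsCoprime (k:ℤ) h := by
      rw [Int.isCoprime_iff_gcd_eq_one, Int.gcd_comm]; exact hco
    exact hco'.dvd_of_dvd_mul_left hdvd
  exact_mod_cast this

lemma cot_bound {k : ℕ} (hk : 0 < k) (h : ℤ) (hco : Int.gcd h k = 1) {m : ℕ}
    (hm : ¬ (k ∣ m)) : |rcot (π * ((h:ℝ) * m) / k)| ≤ k/2 := by
  have hnd := not_dvd_mul h hco hm
  have hs := abs_sin_ge hk hnd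
  have harg : π * (((h * m : ℤ)):ℝ) / k = π * ((h:ℝ) * m) / k := by push_cast; ring
  rw [harg] at hs
  have hkR : (0:ℝ) < k := by exact_mod_cast hk
  have hspos : 0 < |Real.sin (π * ((h:ℝ) * m) / k)| := lt_of_lt_of_le (by positivity) hs
  rw [rcot, abs_div]
  calc |Real.cos (π * ((h:ℝ) * m) / k)| / |Real.sin (π * ((h:ℝ) * m) / k)|
      ≤ 1 / (2/(k:ℝ)) := by
        apply div_le_div₀ (by norm_num) (Real.abs_cos_le_one _) (by positivity) hs
    _ = k/2 := by field_simp

theorem Bbound : (∃ C' : ℝ, ∀ R' : ℕ, 1 ≤ R' → ∀ k : ℕ, 1 ≤ k → ∀ r : ℕ, 1 ≤ r → r ≤ R' →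
        ∀ h : ℤ, Int.gcd h k = 1 →
          norm (Bcst R' r h k) ≤ C' * (k:ℝ)^2) := by
  refine ⟨1, fun R hR k hk r hr1 hr2 h hco => ?_⟩
  have hkR : (0:ℝ) < k := by exact_mod_cast hk
  have hRR : (0:ℝ) < R := by exact_mod_cast hR
  rw [Bcst]
  have hterm : ∀ ℓ ∈ Finset.range k,
      norm (((((R:ℝ)*ℓ+r)/((R:ℝ)*k) - 1/2 : ℝ) : ℂ) *
        (1 - Complex.I * (if ¬ (k ∣ (R*ℓ+r)) then ((rcot (π*((h:ℝ)*((R:ℝ)*ℓ+r))/k) : ℝ) : ℂ) else 0)))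
      ≤ (1/2) * (1 + k/2) := by
    intro ℓ hℓ
    rw [Finset.mem_range] at hℓ
    rw [norm_mul]
    have hx : norm ((((R:ℝ)*ℓ+r)/((R:ℝ)*k) - 1/2 : ℝ) : ℂ) ≤ 1/2 := by
      rw [Complex.norm_real, Real.norm_eq_abs]
      have h1 : (0:ℝ) < (R:ℝ)*ℓ+r := by positivity
      have h2 : (R:ℝ)*ℓ+r ≤ (R:ℝ)*k := by
        have : (ℓ:ℝ) ≤ (k:ℝ) - 1 := by
          have : (ℓ:ℝ) + 1 ≤ k := by exact_mod_cast hℓ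
          linarith
        have hrR : (r:ℝ) ≤ R := by exact_mod_cast hr2
        nlinarith
      have hq1 : (0:ℝ) < ((R:ℝ)*ℓ+r)/((R:ℝ)*k) := by positivity
      have hq2 : ((R:ℝ)*ℓ+r)/((R:ℝ)*k) ≤ 1 := by
        rw [div_le_one (by positivity)]; exact h2
      rw [abs_le]; constructor <;> linarith
    have hy : norm (1 - Complex.I * (if ¬ (k ∣ (R*ℓ+r)) then ((rcot (π*((h:ℝ)*((R:ℝ)*ℓ+r))/k) : ℝ) : ℂ) else 0)) ≤ 1 + k/2 := by
      refine le_trans (norm_sub_le _ _) ?_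
      rw [norm_one, norm_mul, Complex.norm_I, one_mul]
      gcongr
      split_ifs with hdvd
      · rw [norm_zero]; positivity
      · rw [Complex.norm_real, Real.norm_eq_abs]
        have hcast : ((R:ℝ)*ℓ+r) = ((R*ℓ+r : ℕ):ℝ) := by push_cast; ring
        rw [hcast]
        exact cot_bound hk h hco hdvd
    calc _ ≤ (1/2) * (1 + (k:ℝ)/2) := by
          exact mul_le_mul hx hy (by positivity) (by norm_num)
      _ ≤ _ := le_refl _
  calc norm ((1/2 : ℂ) * ∑ ℓ ∈ Finset.range k, _)
      ≤ (1/2) * ((k:ℝ) * ((1/2)*(1+(k:ℝ)/2))) := by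
        rw [norm_mul]
        have : norm (1/2 : ℂ) = 1/2 := by norm_num
        rw [this]
        gcongr
        refine le_trans (norm_sum_le _ _) ?_
        refine le_trans (Finset.sum_le_sum hterm) ?_
        rw [Finset.sum_const, Finset.card_range, nsmul_eq_mul]
    _ ≤ 1 * (k:ℝ)^2 := by
        have hk1 : (1:ℝ) ≤ k := by exact_mod_cast hk
        nlinarith [mul_le_mul_of_nonneg_left hk1 (le_of_lt hkR)]

lemma saw_bound (x : ℝ) : |saw x| ≤ 1/2 := by
  rw [saw]
  split_ifs with hfr
  · norm_num
  · have h1 := Int.fract_nonneg x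
    have h2 := Int.fract_lt_one x
    rw [abs_le]; constructor <;> linarith

lemma log_term_bound {k : ℕ} (hk : 0 < k) (h : ℤ) (hco : Int.gcd h k = 1) {m : ℕ}
    (hm : ¬ (k ∣ m)) :
    |((1:ℝ)/2) * Real.log (4 * Real.sin (π * ((h:ℝ) * m) / k)^2)| ≤
      Real.log k + 2 * Real.log 2 := by
  have hnd := not_dvd_mul h hco hm
  have hs := abs_sin_ge hk hnd
  have harg : π * (((h * m : ℤ)):ℝ) / k = π * ((h:ℝ) * m) / k := by push_cast; ring
  rw [harg] at hs
  set θ := π * ((h:ℝ) * m) / k with hθ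
  have hkR : (0:ℝ) < k := by exact_mod_cast hk
  have hk1 : (1:ℝ) ≤ k := by exact_mod_cast hk
  have hspos : (0:ℝ) < |Real.sin θ| := lt_of_lt_of_le (by positivity) hs
  have hsne : Real.sin θ ≠ 0 := by
    intro h0; rw [h0, abs_zero] at hspos; exact lt_irrefl _ hspos
  have hlogk : 0 ≤ Real.log k := Real.log_nonneg hk1
  have hl2 : (0:ℝ) < Real.log 2 := Real.log_pos (by norm_num)
  have hexp : Real.log (4 * Real.sin θ^2) = 2*Real.log 2 + 2 * Real.log |Real.sin θ| := by
    rw [Real.log_mul (by norm_num) (pow_ne_zero 2 hsne), Real.log_pow, Real.log_abs]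
    norm_num
    rw [show (4:ℝ) = 2^2 by norm_num, Real.log_pow]
    push_cast; ring
  have hub : Real.log |Real.sin θ| ≤ 0 :=
    Real.log_nonpos (abs_nonneg _) (Real.abs_sin_le_one θ)
  have hlb : Real.log 2 - Real.log k ≤ Real.log |Real.sin θ| := by
    have := Real.log_le_log (by positivity : (0:ℝ) < 2/k) hs
    rwa [Real.log_div (by norm_num) (ne_of_gt hkR)] at this
  rw [abs_mul, hexp, abs_of_pos (by norm_num : (0:ℝ) < (1:ℝ)/2)]
  have hmid : abs (2*Real.log 2 + 2*Real.log (abs (Real.sin θ))) ≤ 2*Real.log k + 4*Real.log 2 := by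
    rw [abs_le]; constructor <;> nlinarith
  nlinarith

lemma dvd_case {R r k ℓ : ℕ} (hR : 1 ≤ R) (hk : 1 ≤ k) (hℓ : ℓ < k) (hr1 : 1 ≤ r)
    (hr2 : r ≤ R) (hdvd : k ∣ R*ℓ+r) :
    ∃ j : ℕ, j ∈ Finset.Icc 1 R ∧ ((R:ℝ)*ℓ+r)/((R:ℝ)*k) = (j:ℝ)/R := by
  obtain ⟨j, hj⟩ := hdvd
  have hj1 : 1 ≤ j := by nlinarith
  have hjR : j ≤ R := by nlinarith
  refine ⟨j, Finset.mem_Icc.mpr ⟨hj1, hjR⟩, ?_⟩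
  have hcast : (R:ℝ)*ℓ+r = (k:ℝ)*j := by exact_mod_cast congrArg (Nat.cast : ℕ → ℝ) hj
  have hkR : (k:ℝ) ≠ 0 := by positivity
  have hRR : (R:ℝ) ≠ 0 := by positivity
  rw [hcast]; field_simp

theorem Abound (R : ℕ) (hR : 1 ≤ R) :
    (∃ C : ℝ, ∀ k : ℕ, 1 ≤ k → ∀ r : ℕ, 1 ≤ r → r ≤ R → ∀ h : ℤ, Int.gcd h k = 1 →
        norm (Acst R r h k) ≤ C * ((k:ℝ)^2 * Real.log k + if k = 1 then 1 else 0)) := by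
  have hne : (Finset.Icc 1 R).Nonempty := ⟨1, Finset.mem_Icc.mpr ⟨le_refl 1, hR⟩⟩
  set M : ℝ := (Finset.Icc 1 R).sup' hne (fun j => |digamma ((j:ℝ)/R)|) with hM
  have hM0 : 0 ≤ M := by
    have h1 := Finset.le_sup' (f := fun j : ℕ => |digamma ((j:ℝ)/R)|)
      (Finset.mem_Icc.mpr ⟨le_refl 1, hR⟩)
    exact le_trans (abs_nonneg _) h1
  have hRR : (0:ℝ) < R := by exact_mod_cast hR
  have hR1R : (1:ℝ) ≤ R := by exact_mod_cast hR
  have h2piR : (1:ℝ) ≤ 2*π*R := by nlinarith [Real.pi_gt_three]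
  have hlog2piR : 0 ≤ Real.log (2*π*R) := Real.log_nonneg h2piR
  have hl2 : (0:ℝ) < Real.log 2 := Real.log_pos (by norm_num)
  set C₁ : ℝ := π/2 + 4*Real.log 2 + Real.log (2*π*R) + M with hC₁def
  have hC₁ : 0 ≤ C₁ := by
    have := Real.pi_pos; rw [hC₁def]; positivity
  refine ⟨3*C₁ + 2, fun k hk r hr1 hr2 h hco => ?_⟩
  have hkR : (0:ℝ) < k := by exact_mod_cast hk
  have hk1 : (1:ℝ) ≤ k := by exact_mod_cast hk
  have hlogk : 0 ≤ Real.log k := Real.log_nonneg hk1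
  have hk0 : 0 < k := hk
  -- per-term bound
  have hterm : ∀ ℓ ∈ Finset.range k,
      norm (π * Complex.I * (saw (((h:ℝ)*((R:ℝ)*ℓ+r))/k) : ℝ)
       + (if ¬ (k ∣ (R*ℓ+r)) then
            (((1:ℝ)/2) * Real.log (4 * Real.sin (π*((h:ℝ)*((R:ℝ)*ℓ+r))/k)^2) : ℝ)
          else 0)
       + (if k ∣ (R*ℓ+r) then
            ((Real.log (2*π*R/k) + digamma (((R:ℝ)*ℓ+r)/((R:ℝ)*k))) : ℝ)
          else 0)) ≤ C₁ + 2*Real.log k := by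
    intro ℓ hℓ
    rw [Finset.mem_range] at hℓ
    have hcast : ((R:ℝ)*ℓ+r) = ((R*ℓ+r : ℕ):ℝ) := by push_cast; ring
    refine le_trans (norm_add_le _ _) (le_trans (add_le_add_left (norm_add_le _ _) _) ?_)
    have ha : norm (↑π * Complex.I * ((saw (((h:ℝ)*((R:ℝ)*ℓ+r))/k) : ℝ):ℂ)) ≤ π/2 := by
      rw [norm_mul, norm_mul, Complex.norm_real, Real.norm_eq_abs, Complex.norm_I, Complex.norm_real, Real.norm_eq_abs,
        abs_of_pos Real.pi_pos, mul_one]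
      have := saw_bound (((h:ℝ)*((R:ℝ)*ℓ+r))/k)
      nlinarith [Real.pi_pos]
    have hb : norm (((if ¬ (k ∣ (R*ℓ+r)) then
          (((1:ℝ)/2) * Real.log (4 * Real.sin (π*((h:ℝ)*((R:ℝ)*ℓ+r))/k)^2))
        else 0 : ℝ)) : ℂ) ≤ Real.log k + 2*Real.log 2 := by
      rw [Complex.norm_real, Real.norm_eq_abs]
      split_ifs with hdvd
      · rw [abs_zero]; linarith
      · rw [hcast]
        exact log_term_bound hk0 h hco hdvd
    have hc : norm (((if k ∣ (R*ℓ+r) then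
          ((Real.log (2*π*R/k) + digamma (((R:ℝ)*ℓ+r)/((R:ℝ)*k))))
        else 0 : ℝ)) : ℂ) ≤ Real.log (2*π*R) + Real.log k + M := by
      rw [Complex.norm_real, Real.norm_eq_abs]
      split_ifs with hdvd
      · obtain ⟨j, hjmem, hjeq⟩ := dvd_case hR hk hℓ hr1 hr2 hdvd
        rw [hjeq]
        have hlogdiv : Real.log (2*π*R/k) = Real.log (2*π*R) - Real.log k :=
          Real.log_div (by positivity) (by positivity)
        have hdig : |digamma ((j:ℝ)/R)| ≤ M :=
          Finset.le_sup' (f := fun j : ℕ => |digamma ((j:ℝ)/R)|) hjmem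
        calc |Real.log (2*π*R/k) + digamma ((j:ℝ)/R)|
            ≤ |Real.log (2*π*R/k)| + |digamma ((j:ℝ)/R)| := abs_add_le _ _
          _ ≤ (Real.log (2*π*R) + Real.log k) + M := by
              gcongr
              rw [hlogdiv, abs_le]; constructor <;> linarith
      · rw [abs_zero]; linarith
    rw [hC₁def]; linarith
  -- prefactor
  have hpre : norm (-((k : ℂ) / (2*(π:ℂ)*(R:ℂ)))) = (k:ℝ)/(2*π*R) := by
    rw [norm_neg, norm_div, Complex.norm_natCast]
    congr 1
    rw [show (2*(π:ℂ)*(R:ℂ)) = ((2*π*R : ℝ):ℂ) by push_cast; ring, Complex.norm_real, Real.norm_eq_abs,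
      abs_of_pos (by positivity)]
  have hbig : norm (Acst R r h k) ≤ (k:ℝ)^2 * (C₁ + 2*Real.log k) := by
    rw [Acst, norm_mul, hpre]
    calc (k:ℝ)/(2*π*R) * norm (∑ ℓ ∈ Finset.range k, _)
        ≤ (k:ℝ)/(2*π*R) * ((k:ℝ) * (C₁ + 2*Real.log k)) := by
          gcongr
          refine le_trans (norm_sum_le _ _) ?_
          refine le_trans (Finset.sum_le_sum hterm) ?_
          rw [Finset.sum_const, Finset.card_range, nsmul_eq_mul]
      _ ≤ (k:ℝ) * ((k:ℝ) * (C₁ + 2*Real.log k)) := by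
          have hnn : 0 ≤ (k:ℝ) * (C₁ + 2*Real.log k) :=
            mul_nonneg hkR.le (by linarith)
          apply mul_le_mul_of_nonneg_right ?_ hnn
          rw [div_le_iff₀ (by positivity)]
          nlinarith
      _ = (k:ℝ)^2 * (C₁ + 2*Real.log k) := by ring
  rcases eq_or_lt_of_le hk with hk1' | hk2
  · -- k = 1
    have hkeq : k = 1 := hk1'.symm
    subst hkeq
    have hb1 : norm (Acst R r h 1) ≤ C₁ := by
      simpa [Real.log_one] using hbig
    rw [if_pos rfl]
    norm_num
    linarith
  · -- k ≥ 2
    have hk2' : 2 ≤ k := hk2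
    have hkne1 : k ≠ 1 := by omega
    rw [if_neg hkne1, add_zero]
    have hlogk2 : Real.log 2 ≤ Real.log k := by
      apply Real.log_le_log (by norm_num)
      exact_mod_cast hk2'
    have hl2half : (1:ℝ)/2 ≤ Real.log 2 := by
      have := Real.log_two_gt_d9; linarith
    have hklog : (1:ℝ)/2 ≤ Real.log k := le_trans hl2half hlogk2
    have key : 0 ≤ (3*C₁+2)*Real.log k - (C₁ + 2*Real.log k) := by nlinarith
    calc norm (Acst R r h k) ≤ (k:ℝ)^2 * (C₁ + 2*Real.log k) := hbig
      _ ≤ (3*C₁+2) * ((k:ℝ)^2 * Real.log k) := by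
          nlinarith [mul_nonneg (sq_nonneg (k:ℝ)) key]

/-- Lemma `alpha_beta_bounds`: `A_{R,r,h,k} ≪_R k² log k + δ_{k=1}` and
`B_{R,r,h,k} ≪ k²`. -/
theorem stmt14 (R : ℕ) (hR : 1 ≤ R) :
    (∃ C : ℝ, ∀ k : ℕ, 1 ≤ k → ∀ r : ℕ, 1 ≤ r → r ≤ R → ∀ h : ℤ, Int.gcd h k = 1 →
        ‖Acst R r h k‖ ≤ C * ((k:ℝ)^2 * Real.log k + if k = 1 then 1 else 0))
    ∧ (∃ C' : ℝ, ∀ R' : ℕ, 1 ≤ R' → ∀ k : ℕ, 1 ≤ k → ∀ r : ℕ, 1 ≤ r → r ≤ R' →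
        ∀ h : ℤ, Int.gcd h k = 1 →
          ‖Bcst R' r h k‖ ≤ C' * (k:ℝ)^2) := by
  exact ⟨Abound R hR, Bbound⟩
end
end

section
/- For k ∈ ℕ and ν ∈ ℤ with k ∤ ν: ∫₀^∞ 1/(ζ_k^{−ν} e^x − 1) dx = −πi((ν/k)) − (1/2) log(4 sin²(πν/k)). -/
open scoped Real
open Filter MeasureTheory

noncomputable section

open Set Topology in
private lemma stmt17_aux (w ζ : ℂ) (hwre : w.re < 1) (hζw : ζ * w = 1) (hwabs : ‖w‖ = 1) :
    (∫ x in Set.Ioi (0:ℝ), (1:ℂ) / (ζ * Complex.exp (x:ℂ) - 1)) = -Complex.log (1 - w) := by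
  set f : ℝ → ℂ := fun x => (1:ℂ) / (ζ * Complex.exp (x:ℂ) - 1) with hfdef
  set g : ℝ → ℂ := fun x => 1 - w * Complex.exp (-(x:ℂ)) with hgdef
  set F : ℝ → ℂ := fun x => Complex.log (g x) with hFdef
  set c : ℝ := 1 - max w.re 0 with hcdef
  have hc : 0 < c := by
    rw [hcdef]; rcases le_or_gt w.re 0 with h | h
    · simp [max_eq_right h]
    · simp [max_eq_left h.le]; linarith
  have hζ : ζ ≠ 0 := fun h => by simp [h] at hζw
  have hgx : ∀ x : ℝ, g x = 1 - w * ((Real.exp (-x) : ℝ) : ℂ) := by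
    intro x; rw [hgdef]; push_cast [Complex.ofReal_exp]; norm_num
  have hgre : ∀ x : ℝ, 0 ≤ x → c ≤ (g x).re := by
    intro x hx
    rw [hgx]
    have he0 : 0 < Real.exp (-x) := Real.exp_pos _
    have he1 : Real.exp (-x) ≤ 1 := Real.exp_le_one_iff.2 (by linarith)
    have h3 : (1 - w * ((Real.exp (-x) : ℝ) : ℂ)).re = 1 - w.re * Real.exp (-x) := by
      simp [Complex.sub_re, Complex.mul_re, Complex.ofReal_re, Complex.ofReal_im,
        -Complex.ofReal_exp]
    rw [h3, hcdef]
    have h4 : w.re * Real.exp (-x) ≤ max w.re 0 := by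
      rcases le_or_gt w.re 0 with h | h
      · refine le_trans ?_ (le_max_right _ _); nlinarith
      · refine le_trans ?_ (le_max_left _ _); nlinarith
    linarith
  have hg0 : ∀ x : ℝ, 0 ≤ x → g x ≠ 0 := by
    intro x hx h
    have := hgre x hx
    rw [h] at this; simp at this; linarith
  have hslit : ∀ x : ℝ, 0 ≤ x → g x ∈ Complex.slitPlane :=
    fun x hx => Or.inl (lt_of_lt_of_le hc (hgre x hx))
  have hfac : ∀ x : ℝ, ζ * Complex.exp (x:ℂ) - 1 = ζ * Complex.exp (x:ℂ) * g x := by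
    intro x
    show ζ * Complex.exp (x:ℂ) - 1 = ζ * Complex.exp (x:ℂ) * (1 - w * Complex.exp (-(x:ℂ)))
    have h5 : Complex.exp (x:ℂ) * Complex.exp (-(x:ℂ)) = 1 := by
      rw [← Complex.exp_add]; simp
    linear_combination (ζ*w) * h5 + hζw
  have hden : ∀ x : ℝ, 0 ≤ x → ζ * Complex.exp (x:ℂ) - 1 ≠ 0 := by
    intro x hx
    rw [hfac]
    exact mul_ne_zero (mul_ne_zero hζ (Complex.exp_ne_zero _)) (hg0 x hx)
  have hgd : ∀ x : ℝ, HasDerivAt g (w * Complex.exp (-(x:ℂ))) x := by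
    intro x
    have h1 : HasDerivAt (fun y : ℝ => -(y:ℂ)) (-1) x := by
      exact ((hasDerivAt_id x).ofReal_comp.neg).congr_deriv (by simp)
    have h2 := h1.cexp
    have h3 := (h2.const_mul w).const_sub 1
    exact h3.congr_deriv (by ring)
  have hfd : ∀ x : ℝ, 0 ≤ x → f x = w * Complex.exp (-(x:ℂ)) / g x := by
    intro x hx
    rw [hfdef]
    simp only
    rw [hfac]
    rw [div_eq_div_iff (by rw [← hfac]; exact hden x hx) (hg0 x hx)]
    have h5 : Complex.exp (x:ℂ) * Complex.exp (-(x:ℂ)) = 1 := by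
      rw [← Complex.exp_add]; simp
    linear_combination (-(g x)*ζ*w) * h5 + (-(g x)) * hζw
  have hFd : ∀ x ∈ Ioi (0:ℝ), HasDerivAt F (f x) x := by
    intro x hx
    have := (hgd x).clog_real (hslit x (le_of_lt hx))
    rw [hfd x (le_of_lt hx)]
    exact this
  have habs : ∀ x : ℝ, ‖w * Complex.exp (-(x:ℂ))‖ = Real.exp (-x) := by
    intro x
    rw [norm_mul, hwabs, one_mul, Complex.norm_exp]
    simp
  have hint : IntegrableOn f (Ioi (0:ℝ)) := by
    have hmeas : AEStronglyMeasurable f (volume.restrict (Ioi (0:ℝ))) := by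
      apply ContinuousOn.aestronglyMeasurable _ measurableSet_Ioi
      apply ContinuousOn.div continuousOn_const
      · fun_prop
      · intro x hx; exact hden x (le_of_lt hx)
    apply Integrable.mono' ((exp_neg_integrableOn_Ioi 0 one_pos).const_mul c⁻¹) hmeas
    filter_upwards [self_mem_ae_restrict measurableSet_Ioi] with x hx
    rw [hfd x (le_of_lt hx)]
    rw [norm_div]
    have h1 : ‖w * Complex.exp (-(x:ℂ))‖ = Real.exp (-x) := habs x
    have h2 : c ≤ ‖g x‖ := le_trans (hgre x (le_of_lt hx)) (Complex.re_le_norm _)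
    rw [h1]
    rw [div_le_iff₀ (lt_of_lt_of_le hc h2)] at *
    calc Real.exp (-x) ≤ c⁻¹ * Real.exp (-(1:ℝ) * x) * c := by
          rw [neg_one_mul]; field_simp; rfl
      _ ≤ c⁻¹ * Real.exp (-(1:ℝ) * x) * ‖g x‖ := by
          apply mul_le_mul_of_nonneg_left h2 (by positivity)
  have hcont : ContinuousWithinAt F (Ici (0:ℝ)) 0 := by
    apply ContinuousAt.continuousWithinAt
    apply (continuousAt_clog (hslit 0 le_rfl)).comp
    fun_prop
  have htop : Tendsto F atTop (𝓝 0) := by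
    have h1 : Tendsto g atTop (𝓝 1) := by
      have h2 : Tendsto (fun x : ℝ => w * ((Real.exp (-x) : ℝ) : ℂ)) atTop (𝓝 0) := by
        rw [show (0:ℂ) = w * ((0:ℝ):ℂ) by simp]
        exact (Complex.continuous_ofReal.tendsto 0).comp
          (Real.tendsto_exp_neg_atTop_nhds_zero) |>.const_mul w
      have : Tendsto (fun x : ℝ => 1 - w * ((Real.exp (-x) : ℝ) : ℂ)) atTop (𝓝 1) := by
        simpa using tendsto_const_nhds.sub h2
      refine this.congr fun x => (hgx x).symm
    have : Tendsto F atTop (𝓝 (Complex.log 1)) :=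
      ((continuousAt_clog (Or.inl (by norm_num))).tendsto).comp h1
    simpa using this
  have := integral_Ioi_of_hasDerivAt_of_tendsto hcont hFd hint htop
  rw [this]
  have : F 0 = Complex.log (1 - w) := by
    rw [hFdef]; simp only; rw [hgx]; norm_num
  rw [this, zero_sub]

/-- for `k ∈ ℕ`, `ν ∈ ℤ` with `k ∤ ν`,
`∫₀^∞ 1/(ζ_k^{−ν} e^x − 1) dx = −πi((ν/k)) − (1/2) log(4 sin²(πν/k))`. -/
theorem stmt17 (k : ℕ) (hk : 1 ≤ k) (ν : ℤ) (hν : ¬ ((k : ℤ) ∣ ν)) :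
    (∫ x in Set.Ioi (0:ℝ), (1 : ℂ) / (Complex.exp (-(2*π*Complex.I*ν)/k) * Complex.exp (x:ℂ) - 1))
      = -(π * Complex.I * saw ((ν : ℝ)/k)) - (1/2) * Real.log (4 * Real.sin (π*ν/k)^2) := by
  have hk0 : (k:ℝ) ≠ 0 := Nat.cast_ne_zero.2 (by omega)
  set t : ℝ := Int.fract ((ν:ℝ)/k) with htdef
  set m : ℤ := ⌊(ν:ℝ)/k⌋ with hmdef
  have htm : (ν:ℝ)/k = t + (m : ℝ) := by
    rw [htdef, hmdef, Int.fract]; ring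
  have ht0 : 0 < t := by
    rcases lt_or_eq_of_le (Int.fract_nonneg ((ν:ℝ)/k)) with h | h
    · exact h
    · exfalso; apply hν
      refine ⟨m, ?_⟩
      have h2 : t = 0 := by rw [htdef, ← h]
      rw [h2, zero_add] at htm
      have : (ν:ℝ) = k * (m:ℝ) := by
        field_simp at htm; linear_combination htm
      exact_mod_cast this
  have ht1 : t < 1 := Int.fract_lt_one _
  -- trig setup
  set s : ℝ := Real.sin (π * t) with hsdef
  have hs : 0 < s := Real.sin_pos_of_pos_of_lt_pi (by positivity)
    (by nlinarith [Real.pi_pos])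
  set w : ℂ := Complex.exp (2*π*Complex.I*t) with hwdef
  set ζ : ℂ := Complex.exp (-(2*π*Complex.I*ν)/k) with hζdef
  have hζw : ζ * w = 1 := by
    rw [hζdef, hwdef, ← Complex.exp_add]
    have hC : ((ν:ℂ))/((k:ℂ)) = ((t:ℝ):ℂ) + ((m:ℤ):ℂ) := by
      have := congrArg (fun x : ℝ => (x : ℂ)) htm
      push_cast at this ⊢
      exact this
    rw [show -(2*π*Complex.I*ν)/k + 2*π*Complex.I*t = ((-m : ℤ) : ℂ) * (2*π*Complex.I) by
      push_cast
      linear_combination (-(2*(π:ℂ)*Complex.I)) * hC]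
    exact Complex.exp_int_mul_two_pi_mul_I _
  have hw : w = Complex.exp (((2*π*t : ℝ) : ℂ) * Complex.I) := by
    rw [hwdef]; congr 1; push_cast; ring
  have hwre : w.re = Real.cos (2*π*t) := by
    rw [hw, Complex.exp_re]; simp
  have hwre1 : w.re < 1 := by
    rw [hwre, show 2*π*t = 2*(π*t) by ring, Real.cos_two_mul']
    nlinarith [Real.sin_sq_add_cos_sq (π*t)]
  have hwabs : ‖w‖ = 1 := by
    rw [hw, Complex.norm_exp]; simp
  -- the integral
  have hwim : w.im = Real.sin (2*π*t) := by
    rw [hw, Complex.exp_im]; simp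
  have h1w : (1 : ℂ) - w = ((2*s : ℝ) : ℂ) * Complex.exp (((π*t - π/2 : ℝ) : ℂ) * Complex.I) := by
    apply Complex.ext
    · simp only [Complex.sub_re, Complex.one_re, hwre, Complex.mul_re, Complex.ofReal_re,
        Complex.ofReal_im, Complex.exp_re, Complex.exp_im]
      simp [Real.cos_sub, Real.sin_sub]
      rw [show 2*π*t = 2*(π*t) by ring, Real.cos_two_mul']
      rw [hsdef]
      nlinarith [Real.sin_sq_add_cos_sq (π*t)]
    · simp only [Complex.sub_im, Complex.one_im, hwim, Complex.mul_im, Complex.ofReal_re,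
        Complex.ofReal_im, Complex.exp_re, Complex.exp_im]
      simp [Real.cos_sub, Real.sin_sub]
      rw [show 2*π*t = 2*(π*t) by ring, Real.sin_two_mul, hsdef]
  have hlog : Complex.log (1 - w)
      = ((Real.log (2*s) : ℝ) : ℂ) + ((π*t - π/2 : ℝ) : ℂ) * Complex.I := by
    rw [h1w, show ((2*s:ℝ):ℂ) = Complex.exp ((Real.log (2*s) : ℝ) : ℂ) by
      rw [← Complex.ofReal_exp, Real.exp_log (by positivity)]]
    rw [← Complex.exp_add, Complex.log_exp]
    · simp [Complex.add_im]
      nlinarith [Real.pi_pos]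
    · simp [Complex.add_im]
      nlinarith [Real.pi_pos]
  have key : (∫ x in Set.Ioi (0:ℝ), (1:ℂ) / (ζ * Complex.exp (x:ℂ) - 1))
      = -Complex.log (1 - w) := stmt17_aux w ζ hwre1 hζw hwabs
  rw [key, hlog]
  -- now the right-hand side
  have hsaw : saw ((ν:ℝ)/k) = t - 1/2 := by
    rw [saw, if_neg (by rw [← htdef]; exact ne_of_gt ht0)]
  have hsin : Real.sin (π*(ν:ℝ)/k)^2 = s^2 := by
    rw [show π*(ν:ℝ)/k = π*t + (m:ℤ)*π by rw [mul_div_assoc, htm]; ring]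
    rw [Real.sin_add_int_mul_pi, hsdef, mul_pow]
    rcases Int.even_or_odd m with h | h
    · rw [Even.neg_one_zpow h]; norm_num
    · rw [Odd.neg_one_zpow h]; norm_num
  have hlog2 : Real.log (4 * Real.sin (π*(ν:ℝ)/k)^2) = 2 * Real.log (2*s) := by
    rw [hsin, show 4*s^2 = (2*s)^2 by ring, Real.log_pow]
    push_cast; ring
  rw [hsaw, hlog2]
  push_cast
  ring
end
end
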